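/- Let ⟨T,p⟩ be a star shaped domain in ℝ² with a partition into smaller star shaped domains ⟨T₁,p₁⟩,…,⟨Tₙ,pₙ⟩ (pairwise disjoint interiors, union equal to T). For r ∈ (0,1) let Tᵢ^r denote the contraction of Tᵢ by ratio r around pᵢ. Then there exist r ∈ (0,1) and a point q ∈ int(T) \ ⋃ᵢ Tᵢ^r such that for every i ∈ {1,…,n} and every x ∈ Tᵢ^r, the segment {tq+(1−t)x : t∈[0,1]} is contained in T. -/

import Mathlib

open MeasureTheory Metric Set Real

/-- A star shaped domain `⟨T, p⟩` in the plane (identified with `ℂ`). -/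
def StarShaped (T : Set ℂ) (p : ℂ) : Prop :=
  IsCompact T ∧ p ∈ interior T ∧ ∀ x ∈ T, segment ℝ p x ⊆ T

/-- The contraction of `T` by ratio `r` around `p` (image of `T` under the homothety of
center `p` and ratio `r`). -/
def Contraction (T : Set ℂ) (p : ℂ) (r : ℝ) : Set ℂ :=
  (fun x : ℂ => p + r • (x - p)) '' T

/-- Stable visibility: if `T` is star-shaped about `p`, `ball p ε₀ ⊆ T` and
`ball x ε ⊆ T`, then every point `q` close enough to `p` sees every point `x'`
close enough to `x` through `T`. -/
lemma see_aux {T : Set ℂ} {p x : ℂ} {ε₀ ε : ℝ} (hε₀ : 0 < ε₀) (hε : 0 < ε)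
    (hp : Metric.ball p ε₀ ⊆ T) (hx : Metric.ball x ε ⊆ T)
    (hstar : ∀ y ∈ T, segment ℝ p y ⊆ T) :
    ∃ δ > 0, ∃ ε' > 0, ∀ q ∈ Metric.closedBall p δ, ∀ x' ∈ Metric.closedBall x ε',
      segment ℝ q x' ⊆ T := by
  have hd0 : (0:ℝ) ≤ dist x p := dist_nonneg
  set d := dist x p with hd
  set t₀ : ℝ := ε₀ / (2 * (d + ε + 1)) with ht₀def
  have hden : (0:ℝ) < d + ε + 1 := by linarith
  have ht₀pos : 0 < t₀ := by positivity
  refine ⟨min (ε₀ / 4) (t₀ * ε / 4), by positivity, ε / 4, by positivity, ?_⟩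
  intro q hq x' hx' z hz
  obtain ⟨a, b, ha, hb, hab, rfl⟩ := hz
  rw [Metric.mem_closedBall, dist_eq_norm] at hq hx'
  by_cases hbt : t₀ ≤ b
  · -- large coefficient on x' : represent the point on a segment from p
    have hb0 : 0 < b := lt_of_lt_of_le ht₀pos hbt
    have hbne : b ≠ 0 := ne_of_gt hb0
    have hqp1 : ‖q - p‖ ≤ t₀ * ε / 4 := le_trans hq (min_le_right _ _)
    set w := x' + (a / b) • (q - p) with hwdef
    have hwx : ‖w - x‖ < ε := by
      have hsplit : w - x = (x' - x) + (a / b) • (q - p) := by rw [hwdef]; abel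
      have h1 : ‖w - x‖ ≤ ‖x' - x‖ + (a / b) * ‖q - p‖ := by
        rw [hsplit]
        refine le_trans (norm_add_le _ _) ?_
        rw [norm_smul, Real.norm_of_nonneg (by positivity)]
      have hdb : a / b ≤ 1 / t₀ := by
        rw [div_le_div_iff₀ hb0 ht₀pos]
        nlinarith
      have h2 : (a / b) * ‖q - p‖ ≤ (1 / t₀) * (t₀ * ε / 4) :=
        mul_le_mul hdb hqp1 (norm_nonneg _) (by positivity)
      have h3 : (1 / t₀) * (t₀ * ε / 4) = ε / 4 := by field_simp
      nlinarith
    have hwT : w ∈ T := hx (by rwa [Metric.mem_ball, dist_eq_norm])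
    have hbmul : b * (a / b) = a := by field_simp
    have hsm : b • ((a / b) • (q - p)) = a • (q - p) := by rw [smul_smul, hbmul]
    have heq : a • q + b • x' = a • p + b • w := by
      rw [hwdef, smul_add, hsm, smul_sub]
      abel
    rw [heq]
    exact hstar w hwT ⟨a, b, ha, hb, hab, rfl⟩
  · -- small coefficient on x' : the point is near p
    push_neg at hbt
    apply hp
    rw [Metric.mem_ball, dist_eq_norm]
    have hsplit : a • q + b • x' - p = a • (q - p) + b • (x' - p) := by
      have hpp : a • p + b • p = p := by rw [← add_smul, hab, one_smul]
      calc a • q + b • x' - p = (a • q - a • p) + (b • x' - b • p) + (a • p + b • p) - p := by abel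
        _ = a • (q - p) + b • (x' - p) + (a • p + b • p) - p := by rw [smul_sub, smul_sub]
        _ = a • (q - p) + b • (x' - p) := by rw [hpp]; abel
    rw [hsplit]
    have h1 : ‖a • (q - p) + b • (x' - p)‖ ≤ a * ‖q - p‖ + b * ‖x' - p‖ := by
      refine le_trans (norm_add_le _ _) ?_
      rw [norm_smul, norm_smul, Real.norm_of_nonneg ha, Real.norm_of_nonneg hb]
    have h2 : ‖x' - p‖ ≤ ε / 4 + d := by
      have hsp : x' - p = (x' - x) + (x - p) := by abel
      have : ‖x' - p‖ ≤ ‖x' - x‖ + ‖x - p‖ := by rw [hsp]; exact norm_add_le _ _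
      have hxp : ‖x - p‖ = d := (dist_eq_norm x p).symm
      linarith
    have hq1 : ‖q - p‖ ≤ ε₀ / 4 := le_trans hq (min_le_left _ _)
    have ha1 : a ≤ 1 := by linarith
    have e1 : a * ‖q - p‖ ≤ ε₀ / 4 := by nlinarith [norm_nonneg (q - p)]
    have e2 : b * ‖x' - p‖ ≤ t₀ * (ε / 4 + d) :=
      mul_le_mul hbt.le h2 (norm_nonneg _) ht₀pos.le
    have ht₀le : t₀ * (ε / 4 + d) ≤ ε₀ / 2 := by
      have hle : ε / 4 + d ≤ d + ε + 1 := by linarith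
      have : t₀ * (ε / 4 + d) ≤ t₀ * (d + ε + 1) := by nlinarith
      have heq2 : t₀ * (d + ε + 1) = ε₀ / 2 := by
        rw [ht₀def]; field_simp
      linarith
    linarith

theorem special_point_exists (T : Set ℂ) (p : ℂ) (hT : StarShaped T p)
    (n : ℕ) (Ts : Fin n → Set ℂ) (ps : Fin n → ℂ)
    (hTs : ∀ i, StarShaped (Ts i) (ps i))
    (hdisj : ∀ i j, i ≠ j → Disjoint (interior (Ts i)) (interior (Ts j)))
    (hcover : (⋃ i, Ts i) = T) :
    ∃ r ∈ Set.Ioo (0 : ℝ) 1, ∃ q,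
      q ∈ interior T \ (⋃ i, Contraction (Ts i) (ps i) r) ∧
      ∀ i, ∀ x ∈ Contraction (Ts i) (ps i) r, segment ℝ q x ⊆ T := by
  obtain ⟨hTc, hpint, hstar⟩ := hT
  rcases Nat.eq_zero_or_pos n with hn | hn
  · exfalso
    subst hn
    have hTe : T = ∅ := by rw [← hcover]; exact iUnion_of_empty _
    rw [hTe] at hpint
    simp at hpint
  haveI : Nonempty (Fin n) := Fin.pos_iff_nonempty.mp hn
  have hsub : ∀ j, Ts j ⊆ T := by
    intro j y hy; rw [← hcover]; exact mem_iUnion.mpr ⟨j, hy⟩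
  obtain ⟨ε₀, hε₀, hball₀⟩ := Metric.mem_nhds_iff.mp (mem_interior_iff_mem_nhds.mp hpint)
  have hballs : ∀ j, ∃ ε > 0, Metric.ball (ps j) ε ⊆ T := by
    intro j
    obtain ⟨ε, hε, hb⟩ := Metric.mem_nhds_iff.mp (mem_interior_iff_mem_nhds.mp (hTs j).2.1)
    exact ⟨ε, hε, hb.trans (hsub j)⟩
  choose εs hεspos hεsball using hballs
  have H : ∀ j, ∃ δ > 0, ∃ ε' > 0, ∀ q ∈ Metric.closedBall p δ,
      ∀ x' ∈ Metric.closedBall (ps j) ε', segment ℝ q x' ⊆ T :=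
    fun j => see_aux hε₀ (hεspos j) hball₀ (hεsball j) hstar
  choose δs hδspos ε's hε'spos hsee using H
  have HD : ∀ j, ∃ D > 0, Ts j ⊆ Metric.closedBall (ps j) D := by
    intro j
    obtain ⟨R, hR⟩ := (Metric.isBounded_iff_subset_closedBall (ps j)).mp (hTs j).1.isBounded
    exact ⟨max R 1, lt_of_lt_of_le one_pos (le_max_right _ _),
      hR.trans (Metric.closedBall_subset_closedBall (le_max_left _ _))⟩
  choose Ds hDspos hDsub using HD
  set δ' : ℝ := min ε₀ (Finset.univ.inf' Finset.univ_nonempty δs) with hδ'def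
  have hδ'pos : 0 < δ' := lt_min hε₀ (by rw [Finset.lt_inf'_iff]; exact fun j _ => hδspos j)
  have hδ'le : ∀ j, δ' ≤ δs j :=
    fun j => le_trans (min_le_right _ _) (Finset.inf'_le _ (Finset.mem_univ j))
  have hδ'ε₀ : δ' ≤ ε₀ := min_le_left _ _
  set r : ℝ := min (1/2) (Finset.univ.inf' Finset.univ_nonempty
      (fun j => min (ε's j / Ds j) (δ' / (8 * ((n:ℝ)+1) * Ds j)))) with hrdef
  have hrpos : 0 < r := by
    refine lt_min (by norm_num) ?_
    rw [Finset.lt_inf'_iff]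
    intro j _
    have := hε'spos j; have := hDspos j; have := hδ'pos
    exact lt_min (by positivity) (by positivity)
  have hrle : ∀ j, r ≤ min (ε's j / Ds j) (δ' / (8 * ((n:ℝ)+1) * Ds j)) :=
    fun j => le_trans (min_le_right _ _) (Finset.inf'_le _ (Finset.mem_univ j))
  have hr1 : ∀ j, r * Ds j ≤ ε's j := by
    intro j
    have h := le_trans (hrle j) (min_le_left _ _)
    rw [le_div_iff₀ (hDspos j)] at h
    linarith
  have hr2 : ∀ j, 2 * (r * Ds j) < δ' / (2 * ((n:ℝ)+1)) := by
    intro j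
    have h := le_trans (hrle j) (min_le_right _ _)
    have hn1 : (0:ℝ) < (n:ℝ) + 1 := by positivity
    have hD := hDspos j
    rw [le_div_iff₀ (by positivity)] at h
    rw [lt_div_iff₀ (by positivity)]
    nlinarith [mul_pos (mul_pos hrpos hn1) (hDspos j)]
  have hCsub : ∀ j, Contraction (Ts j) (ps j) r ⊆ Metric.closedBall (ps j) (r * Ds j) := by
    intro j y hy
    obtain ⟨x, hx, rfl⟩ := hy
    rw [Metric.mem_closedBall, dist_eq_norm, add_sub_cancel_left, norm_smul,
      Real.norm_of_nonneg hrpos.le]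
    have hxd : ‖x - ps j‖ ≤ Ds j := by
      have := hDsub j hx; rwa [Metric.mem_closedBall, dist_eq_norm] at this
    exact mul_le_mul_of_nonneg_left hxd hrpos.le
  set A : Fin (n+1) → ℝ := fun k => δ' / 2 * (((k:ℕ):ℝ) + 1) / ((n:ℝ) + 1) with hAdef
  set c : Fin (n+1) → ℂ := fun k => p + (A k : ℂ) with hcdef
  have hn1 : (0:ℝ) < (n:ℝ) + 1 := by positivity
  have hcd : ∀ k, dist (c k) p ≤ δ' / 2 := by
    intro k
    rw [hcdef]
    simp only
    rw [dist_eq_norm, add_sub_cancel_left, Complex.norm_real, Real.norm_eq_abs,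
      abs_of_nonneg (by positivity)]
    rw [hAdef]
    simp only
    rw [div_le_iff₀ hn1]
    have hk : ((k:ℕ):ℝ) + 1 ≤ (n:ℝ) + 1 := by
      have hlt := k.is_lt
      have : ((k:ℕ):ℝ) ≤ (n:ℝ) := by exact_mod_cast Nat.lt_succ_iff.mp hlt
      linarith
    nlinarith
  have hfree : ∃ k : Fin (n+1), c k ∉ ⋃ j, Contraction (Ts j) (ps j) r := by
    by_contra hcon
    push_neg at hcon
    choose f hf using fun k => mem_iUnion.mp (hcon k)
    have hinj : Function.Injective f := by
      intro k k' hkk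
      by_contra hne
      have h1 : dist (c k) (ps (f k)) ≤ r * Ds (f k) := hCsub _ (hf k)
      have h2 : dist (c k') (ps (f k)) ≤ r * Ds (f k) := by
        have := hCsub _ (hf k'); rw [← hkk] at this; exact this
      have hlt : dist (c k) (c k') < δ' / (2 * ((n:ℝ)+1)) := by
        calc dist (c k) (c k') ≤ dist (c k) (ps (f k)) + dist (c k') (ps (f k)) :=
              dist_triangle_right _ _ _
          _ ≤ 2 * (r * Ds (f k)) := by linarith
          _ < _ := hr2 (f k)
      have hge : δ' / (2 * ((n:ℝ)+1)) ≤ dist (c k) (c k') := by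
        have hsub2 : c k - c k' = ((A k - A k' : ℝ) : ℂ) := by
          rw [hcdef]; simp only; push_cast; ring
        rw [dist_eq_norm, hsub2, Complex.norm_real, Real.norm_eq_abs]
        have hAeq : A k - A k' = δ' / (2 * ((n:ℝ)+1)) * (((k:ℕ):ℝ) - ((k':ℕ):ℝ)) := by
          rw [hAdef]; simp only; field_simp; ring
        rw [hAeq, abs_mul, abs_of_nonneg (by positivity)]
        have hnek : ((k:ℕ):ℤ) - ((k':ℕ):ℤ) ≠ 0 := by
          intro hzero
          apply hne
          apply Fin.ext
          omega
        have h1le : (1:ℝ) ≤ |((k:ℕ):ℝ) - ((k':ℕ):ℝ)| := by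
          have hcast : ((k:ℕ):ℝ) - ((k':ℕ):ℝ) = ((((k:ℕ):ℤ) - ((k':ℕ):ℤ) : ℤ) : ℝ) := by
            push_cast; ring
          rw [hcast, ← Int.cast_abs]
          exact_mod_cast Int.one_le_abs hnek
        have hpos2 : (0:ℝ) < δ' / (2 * ((n:ℝ) + 1)) := by positivity
        nlinarith [mul_le_mul_of_nonneg_left h1le hpos2.le]
      linarith
    have hcard := Fintype.card_le_of_injective f hinj
    simp only [Fintype.card_fin] at hcard
    omega
  obtain ⟨k, hk⟩ := hfree
  refine ⟨r, ⟨hrpos, lt_of_le_of_lt (min_le_left _ _) (by norm_num)⟩, c k, ⟨⟨?_, hk⟩, ?_⟩⟩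
  · exact interior_maximal hball₀ Metric.isOpen_ball
      (by rw [Metric.mem_ball]; exact lt_of_le_of_lt (hcd k) (by linarith))
  · intro i x hx
    have hx1 : x ∈ Metric.closedBall (ps i) (ε's i) :=
      Metric.closedBall_subset_closedBall (hr1 i) (hCsub i hx)
    have hq1 : c k ∈ Metric.closedBall p (δs i) := by
      rw [Metric.mem_closedBall]
      have := hδ'le i
      linarith [hcd k, hδ'pos]
    exact hsee i _ hq1 x hx1
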